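/- Let $A, \tilde A$ be strictly upper-triangular $n \times n$ integer matrices with $1 \le k < \ell \le n$, satisfying the relations of the cohomology isomorphism (with $\gamma = \tfrac{1}{2}(A^k_\ell - \tilde A^k_\ell) \in \mathbb{Z}$): $\tilde A^i_\ell = A^i_\ell - \gamma A^i_k$ for $i \ne k$, $\tilde A^i_j = A^i_j$ for $j \ne \ell$, $A^k_j = \tfrac{1}{2}(A^k_\ell + \tilde A^k_\ell)A^\ell_j$ for $j \ne \ell$, and $\tilde\lambda_\ell = \lambda_\ell - \gamma\lambda_k$, $\tilde\lambda_j = \lambda_j$ for $j \ne \ell$. Define $\Lambda(J) = (-1)^m \lambda_{i_0} A^{i_0}_{i_1}\cdots A^{i_{m-1}}_{i_m}$ for $J = \{i_0 < \cdots < i_m\}$, and $\tilde\Lambda$ analogously with $\tilde A, \tilde\lambda$. Then for every $J \subseteq \{1,\dots,n\} \setminus \{k,\ell\}$: $\Lambda(J \cup \{\ell\}) + \tfrac{1}{2}\Lambda(J \cup \{k,\ell\}) = \tilde\Lambda(J \cup \{\ell\}) + \tfrac{1}{2}\tilde\Lambda(J \cup \{k,\ell\})$. -/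

import Mathlib

open Finset

/-- `Λ(J)`: for `J = {i₀ < ⋯ < i_m}`, the value `(-1)^m λ_{i₀} A^{i₀}_{i₁} ⋯ A^{i_{m-1}}_{i_m}`. -/
noncomputable def chainVal {n : ℕ} (A : Fin n → Fin n → ℤ) (lam : Fin n → ℝ)
    (J : Finset (Fin n)) : ℝ :=
  match J.sort (· ≤ ·) with
  | [] => 0
  | a :: rest =>
      (-1 : ℝ) ^ rest.length * lam a *
        (((a :: rest).zip rest).map (fun p => (A p.1 p.2 : ℝ))).prod

namespace LambdaAux

variable {n : ℕ}

/-- Product of matrix entries along consecutive pairs of a list. -/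
noncomputable def edges (A : Fin n → Fin n → ℤ) : List (Fin n) → ℝ
  | [] => 1
  | [_] => 1
  | a :: b :: rest => (A a b : ℝ) * edges A (b :: rest)

/-- `lval` over a list, with an abstract head-weight function `f`. -/
noncomputable def lval (A : Fin n → Fin n → ℤ) (f : Fin n → ℝ) : List (Fin n) → ℝ
  | [] => 0
  | a :: rest => (-1 : ℝ) ^ rest.length * f a * edges A (a :: rest)

lemma zip_prod_eq_edges (A : Fin n → Fin n → ℤ) :
    ∀ (rest : List (Fin n)) (a : Fin n),
      (((a :: rest).zip rest).map (fun p => (A p.1 p.2 : ℝ))).prod = edges A (a :: rest)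
  | [], a => by simp [edges]
  | b :: r, a => by
      simp only [List.zip_cons_cons, List.map_cons, List.prod_cons, edges]
      rw [zip_prod_eq_edges A r b]

lemma chainVal_eq_lval (A : Fin n → Fin n → ℤ) (lam : Fin n → ℝ) (J : Finset (Fin n)) :
    chainVal A lam J = lval A lam (J.sort (· ≤ ·)) := by
  unfold chainVal
  cases h : J.sort (· ≤ ·) with
  | nil => simp [lval]
  | cons a rest => simp [lval, zip_prod_eq_edges A rest a]

lemma edges_congr (A At : Fin n → Fin n → ℤ) :
    ∀ (M : List (Fin n)), (∀ x ∈ M, ∀ y ∈ M, At x y = A x y) → edges At M = edges A M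
  | [], _ => rfl
  | [_], _ => rfl
  | a :: b :: rest, h => by
      simp only [edges]
      rw [h a (by simp) b (by simp),
        edges_congr A At (b :: rest) (fun x hx y hy => h x (by simp [hx]) y (by simp [hy]))]

lemma edges_append (A : Fin n → Fin n → ℤ) :
    ∀ (u : List (Fin n)) (hu : u ≠ []) (a : Fin n) (v : List (Fin n)),
      edges A (u ++ a :: v) = edges A u * (A (u.getLast hu) a : ℝ) * edges A (a :: v)
  | [], hu, _, _ => absurd rfl hu
  | [x], _, a, v => by simp [edges]
  | x :: y :: u', _, a, v => by
      have : (x :: y :: u') ++ a :: v = x :: ((y :: u') ++ a :: v) := by simp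
      rw [this]
      show (A x y : ℝ) * edges A ((y :: u') ++ a :: v) = _
      rw [edges_append A (y :: u') (by simp) a v]
      simp only [edges, List.getLast_cons_cons]
      ring

lemma lval_append (A : Fin n → Fin n → ℤ) (f : Fin n → ℝ)
    (u M : List (Fin n)) (hu : u ≠ []) (hM : M ≠ []) :
    lval A f (u ++ M) = (-1 : ℝ) ^ u.length * f (u.head hu) * edges A u *
      lval A (fun x => (A (u.getLast hu) x : ℝ)) M := by
  obtain ⟨a, u', rfl⟩ := List.exists_cons_of_ne_nil hu
  obtain ⟨b, w, rfl⟩ := List.exists_cons_of_ne_nil hM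
  have h1 : (a :: u') ++ b :: w = a :: (u' ++ b :: w) := by simp
  rw [h1]
  show (-1 : ℝ) ^ (u' ++ b :: w).length * f a * edges A (a :: (u' ++ b :: w)) = _
  have h2 : a :: (u' ++ b :: w) = (a :: u') ++ b :: w := by simp
  rw [h2, edges_append A (a :: u') (by simp) b w]
  simp only [lval, List.length_append, List.length_cons, List.head_cons]
  ring

section Core

variable (A At : Fin n → Fin n → ℤ) (k l : Fin n) (γ : ℤ)

/-- The core identity, with an abstract head weight. -/
lemma core
    (hA : ∀ i j : Fin n, j ≤ i → A i j = 0)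
    (hkl : k < l) (hγ : 2 * γ = A k l - At k l)
    (h1 : ∀ i ≠ k, At i l = A i l - γ * A i k)
    (h2 : ∀ i : Fin n, ∀ j ≠ l, At i j = A i j)
    (f ft : Fin n → ℝ)
    (hfl : ft l = f l - (γ : ℝ) * f k)
    (hfj : ∀ j ≠ l, ft j = f j)
    (s₂ s₃ : List (Fin n)) (hm₂ : ∀ x ∈ s₂, k < x ∧ x < l) (hm₃ : ∀ x ∈ s₃, l < x) :
    lval A f (s₂ ++ l :: s₃) + (1 / 2) * lval A f (k :: (s₂ ++ l :: s₃)) =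
      lval At ft (s₂ ++ l :: s₃) + (1 / 2) * lval At ft (k :: (s₂ ++ l :: s₃)) := by
  have hknel : k ≠ l := ne_of_lt hkl
  -- entries with target ≠ l agree; entries with target l agree when source > k
  have hcol : ∀ x, k < x → At x l = A x l := by
    intro x hx
    rw [h1 x (ne_of_gt hx), hA x k (le_of_lt hx)]
    ring
  cases s₂ with
  | nil =>
    -- lists are l :: s₃ and k :: l :: s₃
    have hE : edges At (l :: s₃) = edges A (l :: s₃) := by
      apply edges_congr
      intro x hx y hy
      rcases List.mem_cons.mp hy with hyl | hy'
      · rw [hyl]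
        rcases List.mem_cons.mp hx with hxl | hx'
        · rw [hxl]; exact hcol l hkl
        · exact hcol x (lt_trans hkl (hm₃ x hx'))
      · exact h2 x y (ne_of_gt (hm₃ y hy'))
    simp only [List.nil_append, lval, edges, List.length_cons]
    have hγℝ : 2 * (γ : ℝ) = (A k l : ℝ) - (At k l : ℝ) := by exact_mod_cast hγ
    rw [hE, hfl, hfj k hknel]
    linear_combination ((-1 : ℝ) ^ s₃.length * f k * edges A (l :: s₃) * (1 / 2)) * hγℝ
  | cons q s₂' =>
    have hq : k < q ∧ q < l := hm₂ q (by simp)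
    set M : List (Fin n) := (q :: s₂') ++ l :: s₃ with hM
    have hmemM : ∀ x ∈ M, k < x := by
      intro x hx
      rw [hM] at hx
      rcases List.mem_append.mp hx with hx' | hx'
      · exact (hm₂ x hx').1
      · rcases List.mem_cons.mp hx' with rfl | hx''
        · exact hkl
        · exact lt_trans hkl (hm₃ x hx'')
    have hE : edges At M = edges A M := by
      apply edges_congr
      intro x hx y hy
      by_cases hyl : y = l
      · subst hyl
        exact hcol x (hmemM x hx)
      · exact h2 x y hyl
    have hMc : M = q :: (s₂' ++ l :: s₃) := by simp [hM]
    have vA : lval A f M = (-1 : ℝ) ^ (s₂' ++ l :: s₃).length * f q * edges A M := by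
      rw [hMc]; rfl
    have vAt : lval At ft M = (-1 : ℝ) ^ (s₂' ++ l :: s₃).length * ft q * edges At M := by
      rw [hMc]; rfl
    have ekA : edges A (k :: M) = (A k q : ℝ) * edges A M := by rw [hMc]; rfl
    have ekAt : edges At (k :: M) = (At k q : ℝ) * edges At M := by rw [hMc]; rfl
    have wA : lval A f (k :: M) = (-1 : ℝ) ^ M.length * f k * edges A (k :: M) := rfl
    have wAt : lval At ft (k :: M) = (-1 : ℝ) ^ M.length * ft k * edges At (k :: M) := rfl
    have hterm1 : lval At ft M = lval A f M := by
      rw [vA, vAt, hE, hfj q (ne_of_lt hq.2)]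
    have hterm2 : lval At ft (k :: M) = lval A f (k :: M) := by
      rw [wA, wAt, ekA, ekAt, hE, hfj k hknel, h2 k q (ne_of_lt hq.2)]
    rw [hterm1, hterm2]

end Core

lemma sorted_dropWhile_le [LinearOrder α] (c : α) :
    ∀ (s : List α), s.Pairwise (· < ·) →
      ∀ x ∈ s.dropWhile (fun y => decide (y < c)), c ≤ x := by
  intro s
  induction s with
  | nil => intro _ x hx; simp at hx
  | cons a s' ih =>
    intro hs x hx
    by_cases h : a < c
    · rw [List.dropWhile_cons_of_pos (by simpa using h)] at hx
      exact ih hs.of_cons x hx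
    · rw [List.dropWhile_cons_of_neg (by simpa using h)] at hx
      rcases List.mem_cons.mp hx with rfl | hx'
      · exact le_of_not_gt h
      · exact le_of_lt (lt_of_le_of_lt (le_of_not_gt h) ((List.pairwise_cons.mp hs).1 x hx'))

/-- Sorting after inserting an element in the "middle". -/
lemma sort_insert_middle {x : Fin n} {J : Finset (Fin n)} (hx : x ∉ J)
    (u v : List (Fin n)) (hs : J.sort (· ≤ ·) = u ++ v)
    (hu : ∀ y ∈ u, y < x) (hv : ∀ y ∈ v, x < y) :
    (insert x J).sort (· ≤ ·) = u ++ x :: v := by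
  refine (fun hp hs' => List.Perm.eq_of_pairwise' (Finset.pairwise_sort _ _) hs' hp) ?_ ?_
  · have p1 : List.Perm ((insert x J).sort (· ≤ ·)) ((insert x J).toList) :=
      Finset.sort_perm_toList _ _
    have p2 : List.Perm ((insert x J).toList) (x :: J.toList) := Finset.toList_insert hx
    have p3 : List.Perm J.toList (u ++ v) := by
      rw [← hs]; exact (Finset.sort_perm_toList _ _).symm
    exact ((p1.trans p2).trans (p3.cons x)).trans List.perm_middle.symm
  · have hsorted : (u ++ v).Pairwise (· ≤ ·) := hs ▸ Finset.pairwise_sort _ _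
    rw [List.pairwise_append] at hsorted ⊢
    obtain ⟨hu', hv', huv⟩ := hsorted
    refine ⟨hu', List.pairwise_cons.mpr ⟨fun y hy => le_of_lt (hv y hy), hv'⟩, ?_⟩
    intro a ha b hb
    rcases List.mem_cons.mp hb with rfl | hb'
    · exact le_of_lt (hu a ha)
    · exact huv a ha b hb'

end LambdaAux

open LambdaAux in
/-- **The mixed `Λ`-identity:** under the relations of the cohomology isomorphism with
`γ = ½(A^k_ℓ - Ã^k_ℓ)`, for every `J ⊆ [n] \ {k,ℓ}`,
`Λ(J ∪ {ℓ}) + ½ Λ(J ∪ {k,ℓ}) = Λ̃(J ∪ {ℓ}) + ½ Λ̃(J ∪ {k,ℓ})`. -/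
theorem Lambda_mixed_identity {n : ℕ} (A At : Fin n → Fin n → ℤ)
    (hA : ∀ i j : Fin n, j ≤ i → A i j = 0)
    (hAt : ∀ i j : Fin n, j ≤ i → At i j = 0)
    (k l : Fin n) (hkl : k < l) (γ : ℤ) (hγ : 2 * γ = A k l - At k l)
    (lam lamt : Fin n → ℝ)
    (h1 : ∀ i ≠ k, At i l = A i l - γ * A i k)
    (h2 : ∀ i : Fin n, ∀ j ≠ l, At i j = A i j)
    (h3 : ∀ j ≠ l, 2 * A k j = (A k l + At k l) * A l j)
    (h4 : lamt l = lam l - (γ : ℝ) * lam k)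
    (h5 : ∀ j ≠ l, lamt j = lam j)
    (J : Finset (Fin n)) (hk : k ∉ J) (hl : l ∉ J) :
    chainVal A lam (insert l J) + (1 / 2) * chainVal A lam (insert k (insert l J)) =
      chainVal At lamt (insert l J) +
        (1 / 2) * chainVal At lamt (insert k (insert l J)) := by
  classical
  have hknel : k ≠ l := ne_of_lt hkl
  set s := J.sort (· ≤ ·) with hsdef
  have hs_lt : s.Pairwise (· < ·) := (Finset.sortedLT_sort J).pairwise
  have hmemJ : ∀ x ∈ s, x ∈ J := fun x hx => (Finset.mem_sort _).mp hx
  set s₁ := s.takeWhile (fun y => decide (y < k)) with hs₁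
  set t := s.dropWhile (fun y => decide (y < k)) with ht
  have hst : s₁ ++ t = s := List.takeWhile_append_dropWhile ..
  have hmem1 : ∀ x ∈ s₁, x < k := by
    intro x hx
    have := List.mem_takeWhile_imp hx
    simpa using this
  have hmemt : ∀ x ∈ t, k < x := by
    intro x hx
    have hle : k ≤ x := sorted_dropWhile_le k s hs_lt x hx
    have hxs : x ∈ s := by rw [← hst]; exact List.mem_append_right _ hx
    exact lt_of_le_of_ne hle (fun h => hk (h ▸ hmemJ x hxs))
  have ht_sorted : t.Pairwise (· < ·) := List.Pairwise.sublist (List.dropWhile_sublist _) hs_lt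
  set s₂ := t.takeWhile (fun y => decide (y < l)) with hs₂
  set s₃ := t.dropWhile (fun y => decide (y < l)) with hs₃
  have hts : s₂ ++ s₃ = t := List.takeWhile_append_dropWhile ..
  have hmem2 : ∀ x ∈ s₂, k < x ∧ x < l := by
    intro x hx
    have hxt : x ∈ t := List.Sublist.mem hx (List.takeWhile_sublist _)
    have := List.mem_takeWhile_imp hx
    exact ⟨hmemt x hxt, by simpa using this⟩
  have hmem3 : ∀ x ∈ s₃, l < x := by
    intro x hx
    have hle : l ≤ x := sorted_dropWhile_le l t ht_sorted x hx
    have hxt : x ∈ t := List.Sublist.mem hx (List.dropWhile_sublist _)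
    have hxs : x ∈ s := by rw [← hst]; exact List.mem_append_right _ hxt
    exact lt_of_le_of_ne hle (fun h => hl (h ▸ hmemJ x hxs))
  -- sort of insert l J
  have hsort1 : (insert l J).sort (· ≤ ·) = (s₁ ++ s₂) ++ l :: s₃ := by
    apply sort_insert_middle hl
    · rw [List.append_assoc, hts, hst]
    · intro y hy
      rcases List.mem_append.mp hy with hy' | hy'
      · exact lt_trans (hmem1 y hy') hkl
      · exact (hmem2 y hy').2
    · exact hmem3
  have hknotin : k ∉ insert l J := by
    simp only [Finset.mem_insert]
    rintro (rfl | h)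
    · exact hknel rfl
    · exact hk h
  have hsort2 : (insert k (insert l J)).sort (· ≤ ·) = s₁ ++ k :: (s₂ ++ l :: s₃) := by
    apply sort_insert_middle hknotin
    · rw [hsort1, List.append_assoc]
    · exact hmem1
    · intro y hy
      rcases List.mem_append.mp hy with hy' | hy'
      · exact (hmem2 y hy').1
      · rcases List.mem_cons.mp hy' with rfl | hy''
        · exact hkl
        · exact lt_trans hkl (hmem3 y hy'')
  rw [chainVal_eq_lval, chainVal_eq_lval, chainVal_eq_lval, chainVal_eq_lval,
    hsort1, hsort2, List.append_assoc]
  cases hc : s₁ with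
  | nil =>
    simp only [List.nil_append]
    exact core A At k l γ hA hkl hγ h1 h2 lam lamt h4 h5 s₂ s₃ hmem2 hmem3
  | cons a u =>
    have hu : s₁ ≠ [] := by rw [hc]; simp
    have hM1 : s₂ ++ l :: s₃ ≠ [] := by
      cases s₂ <;> simp
    have hM2 : k :: (s₂ ++ l :: s₃) ≠ [] := by simp
    rw [← hc]
    rw [lval_append A lam s₁ _ hu hM1, lval_append A lam s₁ _ hu hM2,
      lval_append At lamt s₁ _ hu hM1, lval_append At lamt s₁ _ hu hM2]
    set p := s₁.getLast hu with hp
    have hpmem : p ∈ s₁ := List.getLast_mem hu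
    have hplt : p < k := hmem1 p hpmem
    have hEs₁ : edges At s₁ = edges A s₁ := by
      apply edges_congr
      intro x hx y hy
      exact h2 x y (ne_of_lt (lt_trans (hmem1 y hy) hkl))
    have hhead : lamt (s₁.head hu) = lam (s₁.head hu) :=
      h5 _ (ne_of_lt (lt_trans (hmem1 _ (List.head_mem hu)) hkl))
    have hfl : (fun x => ((At p x : ℤ) : ℝ)) l =
        (fun x => ((A p x : ℤ) : ℝ)) l - (γ : ℝ) * (fun x => ((A p x : ℤ) : ℝ)) k := by
      simp only
      rw [h1 p (ne_of_lt hplt)]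
      push_cast
      ring
    have hfj : ∀ j ≠ l, (fun x => ((At p x : ℤ) : ℝ)) j = (fun x => ((A p x : ℤ) : ℝ)) j := by
      intro j hj
      simp only [h2 p j hj]
    have hcore := core A At k l γ hA hkl hγ h1 h2
      (fun x => ((A p x : ℤ) : ℝ)) (fun x => ((At p x : ℤ) : ℝ)) hfl hfj s₂ s₃ hmem2 hmem3
    rw [hEs₁, hhead]
    linear_combination ((-1 : ℝ) ^ s₁.length * lam (s₁.head hu) * edges A s₁) * hcore
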